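/- Let n ≥ 1 and let τ: [0,1] → ℝ be continuous and strictly increasing. Let d₀(Y;t) = Σ_{i=0}^n a_i·1{Y_i ≤ t < Y_{i+1}} (a_i ∈ ℝ) be an invariant target estimator and let w(Y;t) = Σ_{i=0}^n w_i·1{Y_i ≤ t < Y_{i+1}} with w_i ∈ (0,1] be an invariant weight. Let d₀*(Y;t) = Σ_{i=0}^n E[τ(T_i)]·1{Y_i ≤ t < Y_{i+1}} and define d_w* = w·d₀ + (1−w)·d₀*, i.e., the invariant estimator with weights w_i·a_i + (1−w_i)·E[τ(T_i)]. Then under the integrated balanced-loss risk R_{w,d₀}(d,F) = E_F[∫_ℝ { w·(d − d₀)² + (1−w)·(d − τ(F(t)))² } dF(t)], every invariant estimator d(Y;t) = Σ_{i=0}^n v_i·1{Y_i ≤ t < Y_{i+1}} (v_i ∈ ℝ) has risk constant in F and satisfying R_{w,d₀}(d,F) ≥ R_{w,d₀}(d_w*,F) for all continuous F, with equality if and only if v_i = w_i·a_i + (1−w_i)·E[τ(T_i)] for all i. -/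

import Mathlib

open MeasureTheory Set
open scoped ENNReal NNReal

noncomputable section

/-- Number of sample points `x j ≤ t`, as an element of `Fin (n+1)`.
Note `countLE x t = i` iff `Y_i ≤ t < Y_{i+1}` where `Y_1 ≤ … ≤ Y_n` are the
order statistics of `x` and `Y_0 = -∞`, `Y_{n+1} = +∞`. -/
def countLE {n : ℕ} (x : Fin n → ℝ) (t : ℝ) : Fin (n + 1) :=
  ⟨(Finset.univ.filter (fun j => x j ≤ t)).card,
    Nat.lt_succ_of_le ((Finset.card_filter_le _ _).trans (by simp))⟩

/-- The invariant estimator `d(Y;t) = Σ_{i=0}^n u_i · 1{Y_i ≤ t < Y_{i+1}}`. -/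
def invEst {n : ℕ} (u : Fin (n + 1) → ℝ) : (Fin n → ℝ) → ℝ → ℝ :=
  fun x t => u (countLE x t)

/-- The cumulative distribution function of `μ`. -/
def cdfOf (μ : Measure ℝ) (t : ℝ) : ℝ := (μ (Set.Iic t)).toReal

/-- Distribution of an i.i.d. sample of size `n` from `μ`. -/
def sampleMeasure (n : ℕ) (μ : Measure ℝ) : Measure (Fin n → ℝ) :=
  Measure.pi fun _ => μ

/-- `(n+1)·C(n,i)·t^i·(1−t)^{n−i}`, the `Beta(i+1, n−i+1)` density on `(0,1)`. -/
def betaDen (n i : ℕ) (t : ℝ) : ℝ :=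
  ((n : ℝ) + 1) * (n.choose i) * t ^ i * (1 - t) ^ (n - i)


/-- `E[τ(T_i)] = ∫₀¹ τ(t)·f_{T_i}(t) dt`. -/
def betaMean (n : ℕ) (τ : ℝ → ℝ) (i : Fin (n + 1)) : ℝ :=
  ∫ t in Set.Ioo (0 : ℝ) 1, τ t * betaDen n i t

/-- Integrated balanced-loss risk
`R_{w,d₀}(d,F) = E_F[∫ { w·(d − d₀)² + (1−w)·(d − τ(F(t)))² } dF(t)]`
for invariant weight `w` and invariant target `d₀` with weights `a`. -/
def riskBal {n : ℕ} (μ : Measure ℝ) (τ : ℝ → ℝ) (w a : Fin (n + 1) → ℝ)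
    (d : (Fin n → ℝ) → ℝ → ℝ) : ℝ :=
  ∫ x, (∫ t,
      (invEst w x t * (d x t - invEst a x t) ^ 2 +
        (1 - invEst w x t) * (d x t - τ (cdfOf μ t)) ^ 2) ∂μ)
    ∂(sampleMeasure n μ)


section Aux

lemma fact_prod_nat (i m : ℕ) :
    (i + m + 1).factorial = i.factorial * ∏ j ∈ Finset.range (m + 1), (i + 1 + j) := by
  induction m with
  | zero => simp [Nat.factorial_succ, Nat.factorial, Nat.mul_comm]
  | succ m ih =>
      rw [Finset.prod_range_succ, ← mul_assoc, ← ih]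
      have : i + (m+1) + 1 = (i + m + 1) + 1 := by ring
      rw [this, Nat.factorial_succ]
      ring_nf

lemma beta_nat (i m : ℕ) :
    ∫ u in Set.Ioo (0:ℝ) 1, u ^ i * (1 - u) ^ m
      = (i.factorial * m.factorial : ℝ) / ((i + m + 1).factorial) := by
  have h := Complex.betaIntegral_eval_nat_add_one_right
    (u := (i : ℂ) + 1) (by simp; positivity) m
  rw [Complex.betaIntegral] at h
  have h2 : (∫ x in (0:ℝ)..1, (x:ℂ) ^ ((i:ℂ) + 1 - 1) * (1 - (x:ℂ)) ^ ((m:ℂ) + 1 - 1))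
      = ∫ x in (0:ℝ)..1, ((x ^ i * (1 - x) ^ m : ℝ) : ℂ) := by
    apply intervalIntegral.integral_congr
    intro x _
    simp only [add_sub_cancel_right, Complex.cpow_natCast]
    push_cast
    ring
  rw [h2, intervalIntegral.integral_ofReal] at h
  have hcast : ((i.factorial : ℂ)) * ∏ j ∈ Finset.range (m+1), ((i:ℂ) + 1 + (j:ℂ))
      = (((i+m+1).factorial : ℕ) : ℂ) := by
    exact_mod_cast congrArg (fun k : ℕ => (k : ℂ)) (fact_prod_nat i m).symm
  have hne1 : ((i.factorial : ℂ)) ≠ 0 := by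
    exact_mod_cast Nat.cast_ne_zero.mpr (Nat.factorial_pos i).ne'
  have hne2 : ((((i+m+1).factorial : ℕ)) : ℂ) ≠ 0 := by
    exact Nat.cast_ne_zero.mpr (Nat.factorial_pos _).ne'
  have hprodne : (∏ j ∈ Finset.range (m+1), ((i:ℂ) + 1 + (j:ℂ))) ≠ 0 := by
    intro h0
    rw [h0, mul_zero] at hcast
    exact hne2 hcast.symm
  have h3 : ((∫ x in (0:ℝ)..1, x ^ i * (1 - x) ^ m : ℝ) : ℂ)
      = (((i.factorial * m.factorial : ℝ) / ((i + m + 1).factorial) : ℝ) : ℂ) := by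
    rw [h]
    push_cast
    rw [div_eq_div_iff hprodne (by exact_mod_cast hne2)]
    push_cast at hcast ⊢
    linear_combination (-(m.factorial : ℂ)) * hcast
  have h4 := Complex.ofReal_injective h3
  rw [← h4, intervalIntegral.integral_of_le (by norm_num), integral_Ioc_eq_integral_Ioo]


variable {μ : Measure ℝ} [IsProbabilityMeasure μ] {n : ℕ}

variable {μ : Measure ℝ} [IsProbabilityMeasure μ]

lemma cdfOf_eq_cdf : cdfOf μ = ProbabilityTheory.cdf μ := by
  ext t; rw [cdfOf, ProbabilityTheory.cdf_eq_real, measureReal_def]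

lemma cdfOf_mono : Monotone (cdfOf μ) := by
  intro s t hst
  exact ENNReal.toReal_mono (measure_ne_top μ _) (measure_mono (Iic_subset_Iic.mpr hst))

lemma cdfOf_nonneg (t : ℝ) : 0 ≤ cdfOf μ t := ENNReal.toReal_nonneg

lemma cdfOf_le_one (t : ℝ) : cdfOf μ t ≤ 1 := by
  rw [cdfOf]
  have := prob_le_one (μ := μ) (s := Set.Iic t)
  calc (μ (Set.Iic t)).toReal ≤ (1 : ℝ≥0∞).toReal :=
    ENNReal.toReal_mono (by simp) this
  _ = 1 := by simp

lemma cdfOf_mem_Icc (t : ℝ) : cdfOf μ t ∈ Icc (0:ℝ) 1 := ⟨cdfOf_nonneg t, cdfOf_le_one t⟩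

lemma measure_cdf_le (hF : Continuous (cdfOf μ)) {u : ℝ} (hu0 : 0 < u) (hu1 : u < 1) :
    μ {t | cdfOf μ t ≤ u} = ENNReal.ofReal u := by
  set F := cdfOf μ with hFdef
  set S := {t | F t ≤ u} with hS
  have hne : S.Nonempty := by
    have h0 : Filter.Tendsto F Filter.atBot (nhds 0) := by
      rw [hFdef, cdfOf_eq_cdf]; exact ProbabilityTheory.tendsto_cdf_atBot μ
    obtain ⟨t, ht⟩ := (h0.eventually_lt_const hu0).exists
    exact ⟨t, ht.le⟩
  have hbdd : BddAbove S := by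
    have h1 : Filter.Tendsto F Filter.atTop (nhds 1) := by
      rw [hFdef, cdfOf_eq_cdf]; exact ProbabilityTheory.tendsto_cdf_atTop μ
    obtain ⟨t0, ht0⟩ := (h1.eventually_const_lt hu1).exists
    refine ⟨t0, fun s hs => ?_⟩
    by_contra hc
    push_neg at hc
    exact absurd (le_trans (cdfOf_mono hc.le) hs) (not_le.mpr ht0)
  have hcl : IsClosed S := isClosed_le hF continuous_const
  set s := sSup S with hsdef
  have hsm : s ∈ S := hcl.csSup_mem hne hbdd
  have hSeq : S = Iic s := by
    apply Subset.antisymm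
    · exact fun t ht => le_csSup hbdd ht
    · exact fun t ht => le_trans (cdfOf_mono ht) hsm
  have hFs : F s = u := by
    rcases lt_or_eq_of_le (show F s ≤ u from hsm) with hlt | heq
    · exfalso
      have hopen : IsOpen {t | F t < u} := isOpen_lt hF continuous_const
      obtain ⟨ε, hε, hball⟩ := Metric.mem_nhds_iff.mp (hopen.mem_nhds hlt)
      have : s + ε/2 ∈ S := by
        have hmem : s + ε/2 ∈ Metric.ball s ε := by
          rw [Metric.mem_ball, Real.dist_eq]
          have h' : s + ε/2 - s = ε/2 := by ring
          rw [h', abs_of_pos (by positivity)]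
          linarith
        exact le_of_lt (show F (s + ε/2) < u from hball hmem)
      have := le_csSup hbdd this
      linarith
    · exact heq
  have : μ S = μ (Iic s) := by rw [hSeq]
  rw [this]
  have : μ (Iic s) = ENNReal.ofReal (F s) := by
    rw [hFdef, cdfOf, ENNReal.ofReal_toReal (measure_ne_top μ _)]
  rw [this, hFs]

lemma map_cdf (hF : Continuous (cdfOf μ)) :
    Measure.map (cdfOf μ) μ = volume.restrict (Ioo (0:ℝ) 1) := by
  have hFm : Measurable (cdfOf μ) := hF.measurable
  refine Measure.ext_of_Iic _ _ (fun u => ?_)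
  rw [Measure.map_apply hFm measurableSet_Iic, Measure.restrict_apply measurableSet_Iic]
  rcases lt_or_ge u 0 with hu | hu
  · have h1 : cdfOf μ ⁻¹' Iic u = ∅ := by
      ext t; simp only [mem_preimage, mem_Iic, mem_empty_iff_false, iff_false, not_le]
      exact lt_of_lt_of_le hu (cdfOf_nonneg t)
    have h2 : Iic u ∩ Ioo (0:ℝ) 1 = ∅ := by
      ext t; simp only [mem_inter_iff, mem_Iic, mem_Ioo, mem_empty_iff_false, iff_false]
      rintro ⟨h1', h2', _⟩; linarith
    rw [h1, h2]
    simp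
  · rcases le_or_gt 1 u with hu1 | hu1
    · have h1 : cdfOf μ ⁻¹' Iic u = univ := by
        ext t; simp only [mem_preimage, mem_Iic, mem_univ, iff_true]
        exact le_trans (cdfOf_le_one t) hu1
      have h2 : Iic u ∩ Ioo (0:ℝ) 1 = Ioo 0 1 := by
        apply inter_eq_self_of_subset_right
        intro t ht; exact le_trans ht.2.le hu1
      rw [h1, h2, measure_univ, Real.volume_Ioo]
      norm_num
    · have h2 : Iic u ∩ Ioo (0:ℝ) 1 = Ioc 0 u := by
        ext t
        simp only [mem_inter_iff, mem_Iic, mem_Ioo, mem_Ioc]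
        constructor
        · rintro ⟨h1', h2', _⟩; exact ⟨h2', h1'⟩
        · rintro ⟨h1', h2'⟩; exact ⟨h2', h1', lt_of_le_of_lt h2' hu1⟩
      rw [h2, Real.volume_Ioc]
      rcases eq_or_lt_of_le hu with heq | hu0
      · -- u = 0
        have hz : μ (cdfOf μ ⁻¹' Iic u) = 0 := by
          refine le_antisymm ?_ zero_le
          have hmono : ∀ v : ℝ, 0 < v → v < 1 → μ (cdfOf μ ⁻¹' Iic u) ≤ ENNReal.ofReal v := by
            intro v hv0 hv1
            rw [← measure_cdf_le hF hv0 hv1]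
            apply measure_mono
            intro t ht
            simp only [mem_preimage, mem_Iic] at ht
            exact le_trans ht (by linarith [heq])
          refine ENNReal.le_of_forall_pos_le_add (fun ε hε _ => ?_)
          calc μ (cdfOf μ ⁻¹' Iic u) ≤ ENNReal.ofReal (min (ε/2 : ℝ) (1/2)) := by
                apply hmono _ (by positivity) (by simp; norm_num)
          _ ≤ 0 + ε := by
                simp only [zero_add]
                calc ENNReal.ofReal (min (ε/2 : ℝ) (1/2)) ≤ ENNReal.ofReal (ε/2 : ℝ) :=
                  ENNReal.ofReal_le_ofReal (min_le_left _ _)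
                _ ≤ ε := by
                    rw [ENNReal.ofReal_div_of_pos (by norm_num)]
                    calc ENNReal.ofReal (ε:ℝ) / ENNReal.ofReal 2 ≤ (ε : ℝ≥0∞) / 2 := by
                          rw [ENNReal.ofReal_coe_nnreal]
                          gcongr
                          · norm_num [ENNReal.ofReal]
                    _ ≤ ε := ENNReal.half_le_self
        rw [hz, ← heq]
        simp
      · have h1 : cdfOf μ ⁻¹' Iic u = {t | cdfOf μ t ≤ u} := rfl
        rw [h1, measure_cdf_le hF hu0 hu1, sub_zero]

def box {n : ℕ} (t : ℝ) (S : Finset (Fin n)) : Set (Fin n → ℝ) :=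
  Set.pi univ (fun j => if j ∈ S then Iic t else Ioi t)

lemma mem_box_iff {t : ℝ} {S : Finset (Fin n)} {x : Fin n → ℝ} :
    x ∈ box t S ↔ Finset.univ.filter (fun j => x j ≤ t) = S := by
  constructor
  · intro h
    ext j
    simp only [Finset.mem_filter, Finset.mem_univ, true_and]
    have hj := h j (mem_univ j)
    by_cases hjS : j ∈ S
    · simp [hjS] at hj; exact ⟨fun _ => hjS, fun _ => hj⟩
    · simp [hjS] at hj; exact ⟨fun hle => absurd hle (not_le.mpr hj), fun h' => absurd h' hjS⟩
  · intro h j _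
    by_cases hjS : j ∈ S
    · simp only [hjS, if_true, mem_Iic]
      rw [← h] at hjS
      simpa using hjS
    · simp only [hjS, if_false, mem_Ioi]
      rw [← h] at hjS
      simp only [Finset.mem_filter, Finset.mem_univ, true_and] at hjS
      exact not_le.mp hjS

lemma countLE_set_eq (t : ℝ) (i : Fin (n + 1)) :
    {x : Fin n → ℝ | countLE x t = i}
      = ⋃ S ∈ Finset.powersetCard (i : ℕ) (Finset.univ : Finset (Fin n)), box t S := by
  ext x
  simp only [mem_setOf_eq, mem_iUnion, Finset.mem_powersetCard, exists_prop]
  constructor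
  · intro h
    refine ⟨Finset.univ.filter (fun j => x j ≤ t), ⟨Finset.subset_univ _, ?_⟩, mem_box_iff.mpr rfl⟩
    rw [← h]; rfl
  · rintro ⟨S, ⟨-, hcard⟩, hx⟩
    have := mem_box_iff.mp hx
    apply Fin.ext
    show (Finset.univ.filter (fun j => x j ≤ t)).card = (i : ℕ)
    rw [this, hcard]

lemma measurable_box (t : ℝ) (S : Finset (Fin n)) : MeasurableSet (box t S) :=
  MeasurableSet.univ_pi (fun j => by
    by_cases h : j ∈ S <;> simp [h, measurableSet_Iic, measurableSet_Ioi])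

lemma measurableSet_countLE (t : ℝ) (i : Fin (n + 1)) :
    MeasurableSet {x : Fin n → ℝ | countLE x t = i} := by
  rw [countLE_set_eq]
  exact (Finset.powersetCard (i : ℕ) Finset.univ).measurableSet_biUnion
    (fun S _ => measurable_box t S)

lemma measure_countLE (t : ℝ) (i : Fin (n + 1)) :
    sampleMeasure n μ {x : Fin n → ℝ | countLE x t = i}
      = (n.choose (i : ℕ)) * (μ (Iic t)) ^ (i : ℕ) * (μ (Ioi t)) ^ (n - (i : ℕ)) := by
  rw [countLE_set_eq]
  rw [measure_biUnion_finset ?hd (fun S _ => measurable_box t S)]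
  case hd =>
    intro S hS S' hS' hne
    refine Set.disjoint_left.mpr (fun x hx hx' => ?_)
    exact hne ((mem_box_iff.mp hx).symm.trans (mem_box_iff.mp hx'))
  have hbox : ∀ S ∈ Finset.powersetCard (i : ℕ) (Finset.univ : Finset (Fin n)),
      sampleMeasure n μ (box t S) = (μ (Iic t)) ^ (i : ℕ) * (μ (Ioi t)) ^ (n - (i : ℕ)) := by
    intro S hS
    obtain ⟨-, hcard⟩ := Finset.mem_powersetCard.mp hS
    rw [sampleMeasure, box, Measure.pi_pi]
    have hite : ∀ j : Fin n, μ (if j ∈ S then Iic t else Ioi t)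
        = (if j ∈ S then μ (Iic t) else μ (Ioi t)) := fun j => apply_ite μ _ _ _
    rw [Finset.prod_congr rfl (fun j _ => hite j), Finset.prod_ite, Finset.prod_const,
      Finset.prod_const]
    have h1 : (Finset.univ.filter (fun j : Fin n => j ∈ S)).card = (i : ℕ) := by
      rw [Finset.filter_mem_eq_inter, Finset.univ_inter, hcard]
    have h2 : (Finset.univ.filter (fun j : Fin n => ¬ j ∈ S)).card = n - (i : ℕ) := by
      rw [Finset.filter_not, Finset.card_sdiff_of_subset (Finset.filter_subset _ _),
        Finset.filter_mem_eq_inter, Finset.univ_inter, hcard]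
      simp
    rw [h1, h2]
  rw [Finset.sum_congr rfl hbox, Finset.sum_const, Finset.card_powersetCard]
  simp [nsmul_eq_mul, mul_assoc]

instance : IsProbabilityMeasure (sampleMeasure n μ) := by
  rw [sampleMeasure]; infer_instance

lemma integral_countLE (t : ℝ) (φ : Fin (n + 1) → ℝ) :
    ∫ x, φ (countLE x t) ∂(sampleMeasure n μ)
      = ∑ i : Fin (n + 1), φ i *
          ((n.choose (i : ℕ)) * (cdfOf μ t) ^ (i : ℕ) * (1 - cdfOf μ t) ^ (n - (i : ℕ))) := by
  have hdecomp : ∀ x : Fin n → ℝ, φ (countLE x t)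
      = ∑ i : Fin (n + 1), Set.indicator {x' : Fin n → ℝ | countLE x' t = i} (fun _ => φ i) x := by
    intro x
    rw [Finset.sum_eq_single (countLE x t)]
    · rw [Set.indicator_of_mem (by simp : x ∈ {x' : Fin n → ℝ | countLE x' t = countLE x t})]
    · intro b _ hb
      rw [Set.indicator_of_notMem]
      simp only [mem_setOf_eq]
      exact fun h => hb (by rw [h])
    · simp
  simp_rw [hdecomp]
  rw [integral_finset_sum _
    (fun i _ => (integrable_const (φ i)).indicator (measurableSet_countLE t i))]
  refine Finset.sum_congr rfl (fun i _ => ?_)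
  rw [integral_indicator_const (φ i) (measurableSet_countLE t i), measureReal_def, measure_countLE t i]
  have hIoi : (μ (Ioi t)).toReal = 1 - cdfOf μ t := by
    rw [← compl_Iic, measure_compl measurableSet_Iic (measure_ne_top μ _), measure_univ,
      ENNReal.toReal_sub_of_le prob_le_one ENNReal.one_ne_top]
    simp [cdfOf]
  rw [ENNReal.toReal_mul, ENNReal.toReal_mul, ENNReal.toReal_pow, ENNReal.toReal_pow,
    ENNReal.toReal_natCast, hIoi]
  show _ • _ = _
  rw [smul_eq_mul, cdfOf]
  ring

lemma measurableSet_countLE_pair (i : Fin (n + 1)) :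
    MeasurableSet {p : (Fin n → ℝ) × ℝ | countLE p.1 p.2 = i} := by
  have heq : {p : (Fin n → ℝ) × ℝ | countLE p.1 p.2 = i}
      = ⋃ S ∈ Finset.powersetCard (i : ℕ) (Finset.univ : Finset (Fin n)),
          {p : (Fin n → ℝ) × ℝ | p.1 ∈ box p.2 S} := by
    ext p
    simp only [mem_setOf_eq, mem_iUnion, Finset.mem_powersetCard, exists_prop]
    constructor
    · intro h
      exact ⟨Finset.univ.filter (fun j => p.1 j ≤ p.2),
        ⟨Finset.subset_univ _, by rw [← h]; rfl⟩, mem_box_iff.mpr rfl⟩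
    · rintro ⟨S, ⟨-, hcard⟩, hx⟩
      have := mem_box_iff.mp hx
      apply Fin.ext
      show (Finset.univ.filter (fun j => p.1 j ≤ p.2)).card = (i : ℕ)
      rw [this, hcard]
  rw [heq]
  refine (Finset.powersetCard (i : ℕ) Finset.univ).measurableSet_biUnion (fun S _ => ?_)
  have heq2 : {p : (Fin n → ℝ) × ℝ | p.1 ∈ box p.2 S}
      = ⋂ j : Fin n, {p : (Fin n → ℝ) × ℝ | if j ∈ S then p.1 j ≤ p.2 else p.2 < p.1 j} := by
    ext p
    simp only [mem_setOf_eq, box, Set.mem_pi, mem_univ, forall_true_left, mem_iInter]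
    refine forall_congr' (fun j => ?_)
    by_cases h : j ∈ S <;> simp [h]
  rw [heq2]
  refine MeasurableSet.iInter (fun j => ?_)
  by_cases h : j ∈ S
  · simp only [h, if_true]
    exact measurableSet_le (measurable_fst.eval) measurable_snd
  · simp only [h, if_false]
    exact measurableSet_lt measurable_snd (measurable_fst.eval)



lemma integral_comp_cdf (hF : Continuous (cdfOf μ)) {ψ : ℝ → ℝ} (hψ : Continuous ψ) :
    ∫ t, ψ (cdfOf μ t) ∂μ = ∫ u in Ioo (0:ℝ) 1, ψ u := by
  rw [← MeasureTheory.integral_map hF.measurable.aemeasurable hψ.aestronglyMeasurable,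
    map_cdf hF]

lemma riskBal_eq (τ : ℝ → ℝ) (hτ : ContinuousOn τ (Icc 0 1))
    (w a v : Fin (n + 1) → ℝ) (hF : Continuous (cdfOf μ)) :
    riskBal μ τ w a (invEst v)
      = ∑ i : Fin (n + 1), ∫ u in Ioo (0:ℝ) 1,
          ((n.choose (i : ℕ)) * u ^ (i : ℕ) * (1 - u) ^ (n - (i : ℕ))) *
            (w i * (v i - a i) ^ 2 + (1 - w i) * (v i - τ u) ^ 2) := by
  have hclampmem : ∀ p : ℝ, max 0 (min p 1) ∈ Icc (0:ℝ) 1 :=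
    fun p => ⟨le_max_left _ _, max_le zero_le_one (min_le_right _ _)⟩
  set τc : ℝ → ℝ := fun p => τ (max 0 (min p 1)) with hτcdef
  have hτcc : Continuous τc :=
    hτ.comp_continuous (continuous_const.max (continuous_id.min continuous_const)) hclampmem
  have hτceq : ∀ c ∈ Icc (0:ℝ) 1, τc c = τ c := by
    intro c hc
    have : max 0 (min c 1) = c := by
      rw [min_eq_left hc.2, max_eq_right hc.1]
    rw [hτcdef]; simp only [this]
  set Φ : Fin (n + 1) → ℝ → ℝ :=
    fun i c => w i * (v i - a i) ^ 2 + (1 - w i) * (v i - τc c) ^ 2 with hΦdef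
  have hΦc : ∀ i, Continuous (Φ i) := by
    intro i
    exact continuous_const.add (continuous_const.mul
      ((continuous_const.sub hτcc).pow 2))
  obtain ⟨C, hC⟩ := isCompact_Icc.exists_bound_of_continuousOn hτ
  have hτcbd : ∀ c, |τc c| ≤ C := by
    intro c
    have := hC _ (hclampmem c)
    rwa [Real.norm_eq_abs] at this
  set K : Fin (n + 1) → ℝ := fun i => |w i| * (v i - a i) ^ 2 + (1 + |w i|) * (|v i| + C) ^ 2
    with hKdef
  have hC0 : 0 ≤ C := le_trans (abs_nonneg _) (hτcbd 0)
  have hK0 : ∀ i, 0 ≤ K i := by intro i; rw [hKdef]; positivity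
  have hΦbd : ∀ i c, |Φ i c| ≤ K i := by
    intro i c
    have h1 : |τc c| ≤ C := hτcbd c
    have h2 : |v i - τc c| ≤ |v i| + C :=
      le_trans (abs_sub _ _) (by linarith [abs_nonneg (v i)])
    have h3 : (v i - τc c) ^ 2 ≤ (|v i| + C) ^ 2 := by
      rw [← sq_abs]
      apply pow_le_pow_left₀ (abs_nonneg _) h2
    calc |Φ i c| ≤ |w i * (v i - a i) ^ 2| + |(1 - w i) * (v i - τc c) ^ 2| := abs_add_le _ _
    _ = |w i| * (v i - a i) ^ 2 + |1 - w i| * (v i - τc c) ^ 2 := by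
        rw [abs_mul, abs_mul, abs_of_nonneg (sq_nonneg (v i - a i)), abs_of_nonneg (sq_nonneg (v i - τc c))]
    _ ≤ |w i| * (v i - a i) ^ 2 + (1 + |w i|) * (|v i| + C) ^ 2 := by
        have h4 : |1 - w i| ≤ 1 + |w i| :=
          le_trans (abs_sub _ _) (by simp)
        have h5 : |1 - w i| * (v i - τc c) ^ 2 ≤ (1 + |w i|) * (|v i| + C) ^ 2 := by
          apply mul_le_mul h4 h3 (sq_nonneg _) (by positivity)
        linarith
    _ = K i := rfl
  set f : (Fin n → ℝ) → ℝ → ℝ := fun x t => Φ (countLE x t) (cdfOf μ t) with hfdef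
  have hfun : Function.uncurry f = fun p : (Fin n → ℝ) × ℝ =>
      ∑ i : Fin (n + 1), Set.indicator {q : (Fin n → ℝ) × ℝ | countLE q.1 q.2 = i}
        (fun q => Φ i (cdfOf μ q.2)) p := by
    funext p
    rw [Finset.sum_eq_single (countLE p.1 p.2)]
    · rw [Set.indicator_of_mem (by simp :
        p ∈ {q : (Fin n → ℝ) × ℝ | countLE q.1 q.2 = countLE p.1 p.2})]
      rfl
    · intro b _ hb
      rw [Set.indicator_of_notMem]
      simp only [mem_setOf_eq]
      exact fun h => hb (by rw [h])
    · simp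
  have hmeasf : Measurable (Function.uncurry f) := by
    rw [hfun]
    exact Finset.measurable_sum _ (fun i _ =>
      (((hΦc i).measurable.comp (hF.measurable.comp measurable_snd))).indicator
        (measurableSet_countLE_pair i))
  have hint : Integrable (Function.uncurry f) ((sampleMeasure n μ).prod μ) := by
    refine Integrable.mono' (integrable_const (∑ i, K i)) hmeasf.aestronglyMeasurable
      (Filter.Eventually.of_forall ?_)
    rintro ⟨x, t⟩
    rw [Real.norm_eq_abs]
    calc |Φ (countLE x t) (cdfOf μ t)| ≤ K (countLE x t) := hΦbd _ _
    _ ≤ ∑ i, K i := Finset.single_le_sum (fun i _ => hK0 i) (Finset.mem_univ _)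
  have hrisk : riskBal μ τ w a (invEst v) = ∫ x, ∫ t, f x t ∂μ ∂(sampleMeasure n μ) := by
    rw [riskBal]
    refine integral_congr_ae (Filter.Eventually.of_forall (fun x => ?_))
    refine integral_congr_ae (Filter.Eventually.of_forall (fun t => ?_))
    simp only [invEst, hfdef, hΦdef]
    rw [hτceq (cdfOf μ t) (cdfOf_mem_Icc t)]
  rw [hrisk, integral_integral_swap hint]
  set H : ℝ → ℝ := fun u => ∑ i : Fin (n + 1),
      Φ i u * ((n.choose (i : ℕ)) * u ^ (i : ℕ) * (1 - u) ^ (n - (i : ℕ))) with hHdef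
  have hH : ∀ t, (∫ x, f x t ∂(sampleMeasure n μ)) = H (cdfOf μ t) :=
    fun t => integral_countLE t (fun i => Φ i (cdfOf μ t))
  rw [show (fun t => ∫ x, f x t ∂(sampleMeasure n μ)) = fun t => H (cdfOf μ t) from funext hH]
  have hDc : ∀ i : Fin (n + 1),
      Continuous (fun u : ℝ => ((n.choose (i : ℕ) : ℝ)) * u ^ (i : ℕ) * (1 - u) ^ (n - (i : ℕ))) :=
    fun i => (continuous_const.mul (continuous_pow _)).mul
      ((continuous_const.sub continuous_id).pow _)
  have hHc : Continuous H :=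
    continuous_finset_sum _ (fun i _ => (hΦc i).mul (hDc i))
  rw [integral_comp_cdf hF hHc, hHdef]
  rw [integral_finset_sum _
    (f := fun i u => Φ i u * (((n.choose (i : ℕ) : ℝ)) * u ^ (i : ℕ) * (1 - u) ^ (n - (i : ℕ))))
    (fun i _ => (((hΦc i).mul (hDc i)).integrableOn_Icc).mono_set Ioo_subset_Icc_self)]
  refine Finset.sum_congr rfl (fun i _ => setIntegral_congr_fun measurableSet_Ioo (fun u hu => ?_))
  have hτu : τc u = τ u := hτceq u (Ioo_subset_Icc_self hu)
  simp only [hΦdef, hτu]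
  ring

lemma sum_eq_zero_iff_of_nonneg' : True := trivial

lemma key_index {n : ℕ} (τ : ℝ → ℝ) (hτ : ContinuousOn τ (Set.Icc 0 1)) (i : Fin (n + 1))
    (wi ai vi : ℝ) :
    (∫ u in Ioo (0:ℝ) 1, ((n.choose (i : ℕ)) * u ^ (i : ℕ) * (1 - u) ^ (n - (i : ℕ))) *
        (wi * (vi - ai) ^ 2 + (1 - wi) * (vi - τ u) ^ 2))
      = (∫ u in Ioo (0:ℝ) 1, ((n.choose (i : ℕ)) * u ^ (i : ℕ) * (1 - u) ^ (n - (i : ℕ))) *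
          (wi * ((wi * ai + (1 - wi) * betaMean n τ i) - ai) ^ 2 +
           (1 - wi) * ((wi * ai + (1 - wi) * betaMean n τ i) - τ u) ^ 2))
        + (vi - (wi * ai + (1 - wi) * betaMean n τ i)) ^ 2 / (n + 1) := by
  have hi : (i : ℕ) ≤ n := Nat.lt_succ_iff.mp i.isLt
  set D : ℝ → ℝ := fun u => ((n.choose (i : ℕ)) : ℝ) * u ^ (i : ℕ) * (1 - u) ^ (n - (i : ℕ))
    with hDdef
  have hDc : Continuous D :=
    (continuous_const.mul (continuous_pow _)).mul ((continuous_const.sub continuous_id).pow _)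
  have hnp1 : ((n : ℝ) + 1) ≠ 0 := by positivity
  -- value of ∫ D
  have hb : (∫ u in Ioo (0:ℝ) 1, D u) = 1 / ((n : ℝ) + 1) := by
    have h1 : (∫ u in Ioo (0:ℝ) 1, D u)
        = ((n.choose (i : ℕ)) : ℝ) * ∫ u in Ioo (0:ℝ) 1, u ^ (i : ℕ) * (1 - u) ^ (n - (i : ℕ)) := by
      rw [← integral_const_mul]
      refine setIntegral_congr_fun measurableSet_Ioo (fun u _ => ?_)
      rw [hDdef]; ring
    rw [h1, beta_nat]
    have h2 : ((n.choose (i : ℕ)) : ℝ) * (((i : ℕ).factorial : ℝ) * ((n - (i : ℕ)).factorial : ℝ))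
        = (n.factorial : ℝ) := by
      have h2n : n.choose (i : ℕ) * (((i : ℕ)).factorial * (n - (i : ℕ)).factorial)
          = n.factorial := by
        rw [← Nat.mul_assoc]; exact Nat.choose_mul_factorial_mul_factorial hi
      exact_mod_cast h2n
    have h3 : (i : ℕ) + (n - (i : ℕ)) + 1 = n + 1 := by omega
    rw [h3, Nat.factorial_succ]
    rw [mul_div_assoc'] at *
    rw [h2]
    rw [eq_div_iff (by positivity)]
    field_simp
    push_cast; ring
  -- betaMean in terms of ∫ D * τ
  have hm : betaMean n τ (⟨(i : ℕ), i.isLt⟩) = ((n : ℝ) + 1) * ∫ u in Ioo (0:ℝ) 1, D u * τ u := by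
    rw [betaMean, ← integral_const_mul]
    refine setIntegral_congr_fun measurableSet_Ioo (fun u _ => ?_)
    rw [hDdef, betaDen]
    ring
  -- integrability
  have hIntJ : ∀ y : ℝ, IntegrableOn
      (fun u => D u * (wi * (y - ai) ^ 2 + (1 - wi) * (y - τ u) ^ 2)) (Ioo (0:ℝ) 1) := by
    intro y
    refine (ContinuousOn.integrableOn_Icc ?_).mono_set Ioo_subset_Icc_self
    exact hDc.continuousOn.mul (continuousOn_const.add
      (continuousOn_const.mul ((continuousOn_const.sub hτ).pow 2)))
  have hIntD : IntegrableOn D (Ioo (0:ℝ) 1) :=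
    (hDc.continuousOn.integrableOn_Icc).mono_set Ioo_subset_Icc_self
  have hIntDτ : IntegrableOn (fun u => D u * τ u) (Ioo (0:ℝ) 1) :=
    ((hDc.continuousOn.mul hτ).integrableOn_Icc).mono_set Ioo_subset_Icc_self
  set m := betaMean n τ i with hmdef
  set vs := wi * ai + (1 - wi) * m with hvs
  set c1 := wi * ((vi - ai) ^ 2 - (vs - ai) ^ 2) + (1 - wi) * (vi ^ 2 - vs ^ 2) with hc1
  set c2 := -2 * (1 - wi) * (vi - vs) with hc2
  have hdiff : (∫ u in Ioo (0:ℝ) 1, D u * (wi * (vi - ai) ^ 2 + (1 - wi) * (vi - τ u) ^ 2))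
      - (∫ u in Ioo (0:ℝ) 1, D u * (wi * (vs - ai) ^ 2 + (1 - wi) * (vs - τ u) ^ 2))
      = c1 * (∫ u in Ioo (0:ℝ) 1, D u) + c2 * (∫ u in Ioo (0:ℝ) 1, D u * τ u) := by
    rw [← integral_sub (hIntJ vi) (hIntJ vs), ← integral_const_mul, ← integral_const_mul,
      ← integral_add (hIntD.const_mul c1) (hIntDτ.const_mul c2)]
    refine setIntegral_congr_fun measurableSet_Ioo (fun u _ => ?_)
    rw [hc1, hc2]
    ring
  have hfinal : c1 * (∫ u in Ioo (0:ℝ) 1, D u) + c2 * (∫ u in Ioo (0:ℝ) 1, D u * τ u)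
      = (vi - vs) ^ 2 / ((n : ℝ) + 1) := by
    have hI1 : (∫ u in Ioo (0:ℝ) 1, D u * τ u) = m / ((n : ℝ) + 1) := by
      rw [hm]
      field_simp
    rw [hb, hI1, hc1, hc2, hvs]
    field_simp
    ring
  have := hdiff.trans hfinal
  have hcast : ((n + 1 : ℕ) : ℝ) = (n : ℝ) + 1 := by push_cast; ring
  linarith [this]

end Aux

/-- for invariant target `d₀` (weights `a_i`) and invariant
weight `w` (with `w_i ∈ (0,1]`), every invariant estimator has balanced risk
constant in `F`, minimized uniquely by
`d_w* = w·d₀ + (1−w)·d₀*` with weights `w_i·a_i + (1−w_i)·E[τ(T_i)]`. -/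
theorem balanced_best_invariant
    {n : ℕ} (hn : 1 ≤ n)
    (τ : ℝ → ℝ) (hτc : ContinuousOn τ (Set.Icc 0 1))
    (hτm : StrictMonoOn τ (Set.Icc 0 1))
    (a : Fin (n + 1) → ℝ) (w : Fin (n + 1) → ℝ) (hw : ∀ i, w i ∈ Set.Ioc (0 : ℝ) 1)
    (v : Fin (n + 1) → ℝ) :
    (∀ (μ₁ μ₂ : Measure ℝ), IsProbabilityMeasure μ₁ → Continuous (cdfOf μ₁) →
      IsProbabilityMeasure μ₂ → Continuous (cdfOf μ₂) →
      riskBal μ₁ τ w a (invEst v) = riskBal μ₂ τ w a (invEst v)) ∧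
    (∀ (μ : Measure ℝ), IsProbabilityMeasure μ → Continuous (cdfOf μ) →
      riskBal μ τ w a (invEst (fun i => w i * a i + (1 - w i) * betaMean n τ i)) ≤
        riskBal μ τ w a (invEst v) ∧
      (riskBal μ τ w a (invEst v) =
          riskBal μ τ w a (invEst (fun i => w i * a i + (1 - w i) * betaMean n τ i)) ↔
        ∀ i, v i = w i * a i + (1 - w i) * betaMean n τ i)) := by
  classical
  set vst : Fin (n + 1) → ℝ := fun i => w i * a i + (1 - w i) * betaMean n τ i with hvst
  have hkey : ∀ (μ : Measure ℝ), IsProbabilityMeasure μ → Continuous (cdfOf μ) →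
      riskBal μ τ w a (invEst v)
        = riskBal μ τ w a (invEst vst)
          + ∑ i : Fin (n + 1), (v i - vst i) ^ 2 / ((n : ℝ) + 1) := by
    intro μ hμ hF
    haveI := hμ
    rw [riskBal_eq τ hτc w a v hF, riskBal_eq τ hτc w a vst hF, ← Finset.sum_add_distrib]
    exact Finset.sum_congr rfl (fun i _ => key_index τ hτc i (w i) (a i) (v i))
  constructor
  · intro μ₁ μ₂ h1 hc1 h2 hc2
    haveI := h1; haveI := h2
    rw [riskBal_eq τ hτc w a v hc1, riskBal_eq τ hτc w a v hc2]
  · intro μ hμ hF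
    haveI := hμ
    have hs0 : (0:ℝ) ≤ ∑ i : Fin (n + 1), (v i - vst i) ^ 2 / ((n : ℝ) + 1) :=
      Finset.sum_nonneg (fun i _ => by positivity)
    refine ⟨by rw [hkey μ hμ hF]; linarith, ?_, ?_⟩
    · intro h
      rw [hkey μ hμ hF] at h
      have hsum0 : ∑ i : Fin (n + 1), (v i - vst i) ^ 2 / ((n : ℝ) + 1) = 0 := by linarith
      intro i
      have hterm := (Finset.sum_eq_zero_iff_of_nonneg
        (fun i _ => by positivity : ∀ i ∈ Finset.univ, (0:ℝ) ≤ (v i - vst i) ^ 2 / ((n : ℝ) + 1))).mp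
        hsum0 i (Finset.mem_univ i)
      have hne : ((n : ℝ) + 1) ≠ 0 := by positivity
      have hsq : (v i - vst i) ^ 2 = 0 := by
        rcases div_eq_zero_iff.mp hterm with h' | h'
        · exact h'
        · exact absurd h' hne
      have hsub : v i - vst i = 0 := by
        have := sq_eq_zero_iff.mp hsq
        exact this
      have hvi : v i = vst i := sub_eq_zero.mp hsub
      simpa [hvst] using hvi
    · intro h
      rw [hkey μ hμ hF]
      have hz : ∑ i : Fin (n + 1), (v i - vst i) ^ 2 / ((n : ℝ) + 1) = 0 :=
        Finset.sum_eq_zero (fun i _ => by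
          have : v i = vst i := by simpa [hvst] using h i
          rw [this, sub_self]
          norm_num)
      rw [hz, add_zero]

end
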